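/- For any rank-2 matrix of the form u₁v₁ᵀ + u₂v₂ᵀ with u₁ ⟂ u₂, the nuclear norm lies between √(‖u₁‖²‖v₁‖² + ‖u₂‖²‖v₂‖²) and ‖u₁‖‖v₁‖ + ‖u₂‖‖v₂‖. -/

import Mathlib

open Matrix BigOperators

/-- Euclidean 2-norm of a vector in `ℝ^n`. -/
noncomputable def enorm₂ {n : ℕ} (x : Fin n → ℝ) : ℝ := Real.sqrt (∑ i, x i ^ 2)

/-- Frobenius norm of a real matrix. -/
noncomputable def frobNorm {m n : ℕ} (M : Matrix (Fin m) (Fin n) ℝ) : ℝ :=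
  Real.sqrt (∑ i, ∑ j, M i j ^ 2)

/-- The singular values of a real `m × n` matrix: square roots of the eigenvalues of `Aᵀ A`
(for real matrices `Aᴴ = Aᵀ`). -/
noncomputable def singVal {m n : ℕ} (A : Matrix (Fin m) (Fin n) ℝ) (i : Fin n) : ℝ :=
  Real.sqrt ((show (Aᵀ * A).IsHermitian by
    simpa using Matrix.isHermitian_conjTranspose_mul_self A).eigenvalues i)

/-- Nuclear (trace) norm: the sum of the singular values with multiplicity. -/
noncomputable def nuclearNorm {m n : ℕ} (A : Matrix (Fin m) (Fin n) ℝ) : ℝ :=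
  ∑ i, singVal A i

/-- Spectral norm (operator 2-norm): sup of `‖A x‖₂` over Euclidean unit vectors `x`. -/
noncomputable def specNorm {m n : ℕ} (A : Matrix (Fin m) (Fin n) ℝ) : ℝ :=
  sSup {c | ∃ x : Fin n → ℝ, enorm₂ x = 1 ∧ c = enorm₂ (A.mulVec x)}

/-- Smallest singular value of a real `m × n` matrix. -/
noncomputable def sigmaMin {m n : ℕ} (A : Matrix (Fin m) (Fin n) ℝ) : ℝ :=
  Real.sqrt (⨅ i : Fin n, (show (Aᵀ * A).IsHermitian by
    simpa using Matrix.isHermitian_conjTranspose_mul_self A).eigenvalues i)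

lemma aux_traces {N : ℕ} {A : Matrix (Fin N) (Fin N) ℝ} (hA : A.IsHermitian) :
    A.trace = ∑ i, hA.eigenvalues i ∧ (A * A).trace = ∑ i, hA.eigenvalues i ^ 2 := by
  set V : Matrix (Fin N) (Fin N) ℝ := (hA.eigenvectorUnitary : Matrix (Fin N) (Fin N) ℝ) with hVdef
  have hV : star V * V = 1 := Unitary.coe_star_mul_self hA.eigenvectorUnitary
  have hspec : A = V * Matrix.diagonal (RCLike.ofReal ∘ hA.eigenvalues) * star V :=
    hA.spectral_theorem
  have hdi : ∀ d : Fin N → ℝ, (V * Matrix.diagonal d * star V).trace = ∑ i, d i := by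
    intro d
    rw [Matrix.trace_mul_cycle, hV, Matrix.one_mul, Matrix.trace_diagonal]
  have hofReal : ∀ x : ℝ, (RCLike.ofReal x : ℝ) = x := fun x => rfl
  constructor
  · conv_lhs => rw [hspec]
    rw [hdi]
    simp [hofReal, Function.comp]
  · set D : Matrix (Fin N) (Fin N) ℝ := Matrix.diagonal (RCLike.ofReal ∘ hA.eigenvalues) with hDdef
    have h2 : V * D * star V * (V * D * star V) = V * (D * D) * star V := by
      simp only [Matrix.mul_assoc]
      rw [← Matrix.mul_assoc (star V) V (D * star V), hV, Matrix.one_mul]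
    conv_lhs => rw [hspec]
    rw [show (V * D * star V * (V * D * star V)).trace = (V * (D*D) * star V).trace from by rw [h2],
      hDdef, Matrix.diagonal_mul_diagonal, hdi]
    simp [hofReal, Function.comp, pow_two]


lemma aux_rank_add {m n : ℕ} (A B : Matrix (Fin m) (Fin n) ℝ) :
    (A + B).rank ≤ A.rank + B.rank := by
  rw [Matrix.rank, Matrix.rank, Matrix.rank, Matrix.mulVecLin_add]
  have h : LinearMap.range (A.mulVecLin + B.mulVecLin) ≤
      LinearMap.range A.mulVecLin ⊔ LinearMap.range B.mulVecLin := by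
    rintro x ⟨y, rfl⟩
    exact Submodule.mem_sup.2 ⟨A.mulVecLin y, ⟨y, rfl⟩, B.mulVecLin y, ⟨y, rfl⟩, rfl⟩
  exact le_trans (Submodule.finrank_mono h) (Submodule.finrank_add_le_finrank_add_finrank _ _)

lemma aux_rank_vmv {m n : ℕ} (u : Fin m → ℝ) (v : Fin n → ℝ) :
    (vecMulVec u v).rank ≤ 1 := by
  rw [vecMulVec_eq Unit u v]
  exact le_trans (Matrix.rank_mul_le_left _ _)
    (by simpa using Matrix.rank_le_card_width (Matrix.replicateCol Unit u))

lemma aux_le_of_sq {a b : ℝ} (ha : 0 ≤ a) (hb : 0 ≤ b) (h : a ^ 2 ≤ b ^ 2) : a ≤ b := by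
  nlinarith

lemma aux_sum_sqrt_le {N : ℕ} (lam : Fin N → ℝ) (hpos : ∀ k, 0 ≤ lam k)
    (i j : Fin N) (hsupp : ∀ k, k ≠ i → k ≠ j → lam k = 0)
    (s₁ s₂ : ℝ) (hs₁ : 0 ≤ s₁) (hs₂ : 0 ≤ s₂)
    (hT : ∑ k, lam k = s₁ ^ 2 + s₂ ^ 2)
    (hE : (∑ k, lam k) ^ 2 - ∑ k, lam k ^ 2 ≤ 2 * (s₁ * s₂) ^ 2) :
    ∑ k, Real.sqrt (lam k) ≤ s₁ + s₂ := by
  by_cases hij : i = j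
  · subst hij
    have h1 : ∑ k, lam k = lam i :=
      Finset.sum_eq_single i (fun k _ hk => hsupp k hk hk) (by simp)
    have h2 : ∑ k, Real.sqrt (lam k) = Real.sqrt (lam i) :=
      Finset.sum_eq_single i (fun k _ hk => by rw [hsupp k hk hk, Real.sqrt_zero]) (by simp)
    rw [h2]
    apply aux_le_of_sq (Real.sqrt_nonneg _) (by positivity)
    rw [Real.sq_sqrt (hpos i), ← h1, hT]
    nlinarith
  · have h1 : ∑ k, lam k = lam i + lam j := by
      rw [← Finset.sum_subset (Finset.subset_univ {i, j})
        (fun k _ hk => by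
          simp only [Finset.mem_insert, Finset.mem_singleton, not_or] at hk
          exact hsupp k hk.1 hk.2)]
      rw [Finset.sum_pair hij]
    have h1' : ∑ k, lam k ^ 2 = lam i ^ 2 + lam j ^ 2 := by
      rw [← Finset.sum_subset (Finset.subset_univ {i, j})
        (fun k _ hk => by
          simp only [Finset.mem_insert, Finset.mem_singleton, not_or] at hk
          rw [hsupp k hk.1 hk.2]; ring)]
      rw [Finset.sum_pair hij]
    have h2 : ∑ k, Real.sqrt (lam k) = Real.sqrt (lam i) + Real.sqrt (lam j) := by
      rw [← Finset.sum_subset (Finset.subset_univ {i, j})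
        (fun k _ hk => by
          simp only [Finset.mem_insert, Finset.mem_singleton, not_or] at hk
          rw [hsupp k hk.1 hk.2, Real.sqrt_zero])]
      rw [Finset.sum_pair hij]
    have hprod : lam i * lam j ≤ (s₁ * s₂) ^ 2 := by
      rw [h1, h1'] at hE; nlinarith
    have hsq : Real.sqrt (lam i * lam j) ≤ s₁ * s₂ := by
      calc Real.sqrt (lam i * lam j) ≤ Real.sqrt ((s₁ * s₂) ^ 2) := Real.sqrt_le_sqrt hprod
        _ = s₁ * s₂ := Real.sqrt_sq (by positivity)
    rw [h2]
    apply aux_le_of_sq (by positivity) (by positivity)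
    have e : (Real.sqrt (lam i) + Real.sqrt (lam j)) ^ 2
        = lam i + lam j + 2 * Real.sqrt (lam i * lam j) := by
      rw [add_sq, Real.sq_sqrt (hpos i), Real.sq_sqrt (hpos j),
        Real.sqrt_mul (hpos i)]
      ring
    rw [e, ← h1, hT]
    nlinarith

/-- For `u₁ ⟂ u₂`, the nuclear norm of `u₁v₁ᵀ + u₂v₂ᵀ` lies between
`√(‖u₁‖²‖v₁‖² + ‖u₂‖²‖v₂‖²)` and `‖u₁‖‖v₁‖ + ‖u₂‖‖v₂‖`. -/
theorem nuclearNorm_rank_two_bounds {m n : ℕ} (u₁ u₂ : Fin m → ℝ) (v₁ v₂ : Fin n → ℝ)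
    (horth : (∑ i, u₁ i * u₂ i) = 0) :
    Real.sqrt (enorm₂ u₁ ^ 2 * enorm₂ v₁ ^ 2 + enorm₂ u₂ ^ 2 * enorm₂ v₂ ^ 2)
        ≤ nuclearNorm (vecMulVec u₁ v₁ + vecMulVec u₂ v₂) ∧
    nuclearNorm (vecMulVec u₁ v₁ + vecMulVec u₂ v₂)
        ≤ enorm₂ u₁ * enorm₂ v₁ + enorm₂ u₂ * enorm₂ v₂ := by
  classical
  set A : Matrix (Fin m) (Fin n) ℝ := vecMulVec u₁ v₁ + vecMulVec u₂ v₂ with hAdef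
  set lam : Fin n → ℝ := (Matrix.isHermitian_conjTranspose_mul_self A).eigenvalues with hlam
  have hpos : ∀ k, 0 ≤ lam k := fun k => Matrix.eigenvalues_conjTranspose_mul_self_nonneg A k
  -- abbreviations
  set a : ℝ := ∑ i, u₁ i ^ 2 with ha_def
  set b : ℝ := ∑ i, u₂ i ^ 2 with hb_def
  set B₁ : ℝ := ∑ j, v₁ j ^ 2 with hB1_def
  set B₂ : ℝ := ∑ j, v₂ j ^ 2 with hB2_def
  set c : ℝ := ∑ j, v₁ j * v₂ j with hc_def
  have ha : 0 ≤ a := Finset.sum_nonneg fun i _ => sq_nonneg _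
  have hb : 0 ≤ b := Finset.sum_nonneg fun i _ => sq_nonneg _
  have hB1 : 0 ≤ B₁ := Finset.sum_nonneg fun i _ => sq_nonneg _
  have hB2 : 0 ≤ B₂ := Finset.sum_nonneg fun i _ => sq_nonneg _
  have heu1 : enorm₂ u₁ ^ 2 = a := Real.sq_sqrt ha
  have heu2 : enorm₂ u₂ ^ 2 = b := Real.sq_sqrt hb
  have hev1 : enorm₂ v₁ ^ 2 = B₁ := Real.sq_sqrt hB1
  have hev2 : enorm₂ v₂ ^ 2 = B₂ := Real.sq_sqrt hB2
  -- entries of the Gram matrix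
  have hM : ∀ j k, (Aᴴ * A) j k = a * (v₁ j * v₁ k) + b * (v₂ j * v₂ k) := by
    intro j k
    have hterm : ∀ i, Aᴴ j i * A i k =
        v₁ j * v₁ k * u₁ i ^ 2 + v₂ j * v₂ k * u₂ i ^ 2
          + (v₁ j * v₂ k + v₂ j * v₁ k) * (u₁ i * u₂ i) := by
      intro i
      simp only [hAdef, Matrix.conjTranspose_apply, Matrix.add_apply, Matrix.vecMulVec_apply,
        star_trivial]
      ring
    rw [Matrix.mul_apply, Finset.sum_congr rfl (fun i _ => hterm i), Finset.sum_add_distrib,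
      Finset.sum_add_distrib, ← Finset.mul_sum, ← Finset.mul_sum, ← Finset.mul_sum, horth,
      mul_zero, add_zero, ← ha_def, ← hb_def]
    ring
  -- trace
  have hTr : (Aᴴ * A).trace = a * B₁ + b * B₂ := by
    rw [Matrix.trace]
    simp only [Matrix.diag_apply]
    rw [Finset.sum_congr rfl (fun j (_ : j ∈ Finset.univ) => hM j j), Finset.sum_add_distrib,
      ← Finset.mul_sum, ← Finset.mul_sum]
    congr 1
    · congr 1; rw [hB1_def]; exact Finset.sum_congr rfl fun j _ => (sq (v₁ j)).symm ▸ (pow_two (v₁ j)).symm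
    · congr 1; rw [hB2_def]; exact Finset.sum_congr rfl fun j _ => (pow_two (v₂ j)).symm
  -- trace of the square
  have hTr2 : ((Aᴴ * A) * (Aᴴ * A)).trace = a^2*B₁^2 + b^2*B₂^2 + 2*a*b*c^2 := by
    rw [Matrix.trace]
    simp only [Matrix.diag_apply, Matrix.mul_apply]
    calc ∑ j, ∑ k, (Aᴴ * A) j k * (Aᴴ * A) k j
        = ∑ j, ∑ k, (a^2*(v₁ j^2 * v₁ k^2) + b^2*(v₂ j^2 * v₂ k^2)
            + 2*a*b*((v₁ j * v₂ j) * (v₁ k * v₂ k))) :=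
          Finset.sum_congr rfl fun j _ => Finset.sum_congr rfl fun k _ => by
            rw [hM j k, hM k j]; ring
      _ = a^2*B₁^2 + b^2*B₂^2 + 2*a*b*c^2 := by
          simp only [Finset.sum_add_distrib, ← Finset.mul_sum, ← Finset.sum_mul_sum]
          rw [hB1_def, hB2_def, hc_def]
          rw [← Finset.sum_mul, ← Finset.sum_mul, ← Finset.sum_mul]
          ring
  obtain ⟨hT_eig, hQ_eig⟩ := aux_traces (Matrix.isHermitian_conjTranspose_mul_self A)
  have hsum : ∑ k, lam k = a * B₁ + b * B₂ := by rw [← hT_eig, hTr]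
  have hsumsq : ∑ k, lam k ^ 2 = a^2*B₁^2 + b^2*B₂^2 + 2*a*b*c^2 := by rw [← hQ_eig, hTr2]
  constructor
  · rw [heu1, heu2, hev1, hev2, ← hsum]
    have h2 : ∑ k, lam k ≤ (∑ k, Real.sqrt (lam k)) ^ 2 := by
      calc ∑ k, lam k = ∑ k, Real.sqrt (lam k) ^ 2 :=
            Finset.sum_congr rfl fun k _ => (Real.sq_sqrt (hpos k)).symm
        _ ≤ (∑ k, Real.sqrt (lam k)) ^ 2 :=
            Finset.sum_sq_le_sq_sum_of_nonneg fun k _ => Real.sqrt_nonneg _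
    calc Real.sqrt (∑ k, lam k) ≤ Real.sqrt ((∑ k, Real.sqrt (lam k))^2) := Real.sqrt_le_sqrt h2
      _ = ∑ k, Real.sqrt (lam k) := Real.sqrt_sq (Finset.sum_nonneg fun k _ => Real.sqrt_nonneg _)
  · rcases Nat.eq_zero_or_pos n with hn | hn
    · subst hn
      have hz : nuclearNorm A = 0 := by simp [nuclearNorm]
      rw [hz]
      have e1 : (0:ℝ) ≤ enorm₂ u₁ := Real.sqrt_nonneg _
      have e2 : (0:ℝ) ≤ enorm₂ u₂ := Real.sqrt_nonneg _
      have e3 : (0:ℝ) ≤ enorm₂ v₁ := Real.sqrt_nonneg _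
      have e4 : (0:ℝ) ≤ enorm₂ v₂ := Real.sqrt_nonneg _
      positivity
    haveI : Nonempty (Fin n) := ⟨⟨0, hn⟩⟩
    have hrank : Fintype.card {i // lam i ≠ 0} ≤ 2 := by
      have h1 : (Aᴴ * A).rank = Fintype.card {i // lam i ≠ 0} :=
        (Matrix.isHermitian_conjTranspose_mul_self A).rank_eq_card_non_zero_eigs
      have h2 : (Aᴴ * A).rank = A.rank := Matrix.rank_conjTranspose_mul_self A
      have h3 : A.rank ≤ 2 :=
        le_trans (aux_rank_add _ _) (add_le_add (aux_rank_vmv _ _) (aux_rank_vmv _ _))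
      omega
    set S : Finset (Fin n) := Finset.univ.filter (fun k => lam k ≠ 0) with hSdef
    have hScard : S.card ≤ 2 := by
      rw [hSdef, ← Fintype.card_subtype]
      exact hrank
    have hzero : ∀ k, k ∉ S → lam k = 0 := fun k hk => by
      by_contra h; exact hk (by simp [hSdef, h])
    obtain ⟨i, j, hsupp⟩ : ∃ i j : Fin n, ∀ k, k ≠ i → k ≠ j → lam k = 0 := by
      rcases S.eq_empty_or_nonempty with hS | hS
      · exact ⟨Classical.arbitrary _, Classical.arbitrary _,
          fun k _ _ => hzero k (by simp [hS])⟩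
      · rcases eq_or_lt_of_le hScard with h2 | h2
        · obtain ⟨x, y, hxy, hSxy⟩ := Finset.card_eq_two.mp h2
          exact ⟨x, y, fun k hkx hky => hzero k (by simp [hSxy, hkx, hky])⟩
        · have h1 : S.card = 1 := by
            have := Finset.Nonempty.card_pos hS; omega
          obtain ⟨x, hSx⟩ := Finset.card_eq_one.mp h1
          exact ⟨x, x, fun k hkx _ => hzero k (by simp [hSx, hkx])⟩
    have hs₁ : 0 ≤ enorm₂ u₁ * enorm₂ v₁ :=
      mul_nonneg (Real.sqrt_nonneg _) (Real.sqrt_nonneg _)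
    have hs₂ : 0 ≤ enorm₂ u₂ * enorm₂ v₂ :=
      mul_nonneg (Real.sqrt_nonneg _) (Real.sqrt_nonneg _)
    have hT : ∑ k, lam k = (enorm₂ u₁ * enorm₂ v₁)^2 + (enorm₂ u₂ * enorm₂ v₂)^2 := by
      rw [hsum, mul_pow, mul_pow, heu1, heu2, hev1, hev2]
    have hE : (∑ k, lam k)^2 - ∑ k, lam k^2
        ≤ 2*((enorm₂ u₁*enorm₂ v₁)*(enorm₂ u₂*enorm₂ v₂))^2 := by
      rw [hsum, hsumsq]
      have h4 : ((enorm₂ u₁*enorm₂ v₁)*(enorm₂ u₂*enorm₂ v₂))^2 = (a*B₁)*(b*B₂) := by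
        rw [mul_pow, mul_pow, mul_pow, heu1, heu2, hev1, hev2]
      rw [h4]
      nlinarith [mul_nonneg (mul_nonneg ha hb) (sq_nonneg c)]
    exact aux_sum_sqrt_le lam hpos i j hsupp _ _ hs₁ hs₂ hT hE
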